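/- Let 𝕂 be an algebraically closed field of characteristic 0, I an ideal of 𝕂[x₁,…,xₙ] such that A = 𝕂[x]/I has finite dimension r over 𝕂, and let {ξ₁,…,ξ_{r'}} ⊂ 𝕂ⁿ be the zero set of I. For each i let Dᵢ = D_{ξᵢ}(I). Then: (i) each Dᵢ is stable under all partial derivatives ∂/∂yⱼ; (ii) setting μᵢ = dim Dᵢ one has μ₁ + ⋯ + μ_{r'} = r; (iii) every linear form Λ : 𝕂[x] → 𝕂 vanishing on I can be written uniquely as Λ = Σ_{i=1}^{r'} ωᵢ·e_{ξᵢ} with ωᵢ ∈ Dᵢ, and conversely every linear form of this shape vanishes on I. -/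

import Mathlib

open MvPolynomial

namespace PolyExp

variable {K : Type*} [Field K] {n : ℕ}

/-- The iterated partial derivative operator `∂^β` on polynomials. -/
noncomputable def pderivPow (β : Fin n →₀ ℕ) :
    Module.End K (MvPolynomial (Fin n) K) :=
  (List.ofFn fun i : Fin n =>
    ((MvPolynomial.pderiv i).toLinearMap : Module.End K (MvPolynomial (Fin n) K)) ^ (β i)).prod

/-- The constant coefficient differential operator `ω(∂) = Σ_β ω_β ∂^β`. -/
noncomputable def diffOp (ω : MvPolynomial (Fin n) K) :
    Module.End K (MvPolynomial (Fin n) K) :=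
  ∑ β ∈ ω.support, ω.coeff β • pderivPow β

/-- The evaluation linear form `e_ξ : p ↦ p(ξ)`. -/
noncomputable def evalDual (ξ : Fin n → K) : Module.Dual K (MvPolynomial (Fin n) K) :=
  (MvPolynomial.aeval ξ).toLinearMap

/-- The polynomial-exponential linear form `ω·e_ξ : p ↦ (ω(∂)p)(ξ)`. -/
noncomputable def polyExpDual (ω : MvPolynomial (Fin n) K) (ξ : Fin n → K) :
    Module.Dual K (MvPolynomial (Fin n) K) :=
  evalDual ξ ∘ₗ diffOp ω

/-- The Hankel operator `H_σ : p ↦ (q ↦ σ(p·q))`. -/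
noncomputable def hankel (σ : Module.Dual K (MvPolynomial (Fin n) K)) :
    MvPolynomial (Fin n) K →ₗ[K] Module.Dual K (MvPolynomial (Fin n) K) :=
  (LinearMap.llcomp K (MvPolynomial (Fin n) K) (MvPolynomial (Fin n) K) K σ) ∘ₗ
    (LinearMap.mul K (MvPolynomial (Fin n) K))

/-- `μ(ω)`: the dimension of the span of all partial derivatives of `ω`. -/
noncomputable def mu (ω : MvPolynomial (Fin n) K) : ℕ :=
  Module.finrank K (Submodule.span K (Set.range fun β : Fin n →₀ ℕ => pderivPow β ω))

/-- The kernel `I_σ` of the Hankel operator, as an ideal. -/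
def hankelKer (σ : Module.Dual K (MvPolynomial (Fin n) K)) : Ideal (MvPolynomial (Fin n) K) where
  carrier := {p | ∀ q, σ (p * q) = 0}
  add_mem' := by
    intro a b ha hb q
    rw [add_mul, map_add, ha q, hb q, add_zero]
  zero_mem' := by
    intro q
    rw [zero_mul, map_zero]
  smul_mem' := by
    intro c p hp q
    rw [smul_eq_mul, mul_comm c p, mul_assoc]
    exact hp (c * q)

section Aux

lemma pderiv_pow_monomial (i : Fin n) (k : ℕ) (α : Fin n →₀ ℕ) (c : K) :
    (((pderiv i).toLinearMap : Module.End K (MvPolynomial (Fin n) K)) ^ k) (monomial α c) =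
      monomial (α - Finsupp.single i k) (((α i).descFactorial k : K) * c) := by
  induction k with
  | zero => simp
  | succ k ih =>
      rw [pow_succ', Module.End.mul_apply, ih]
      simp only [Derivation.coeFn_coe, pderiv_monomial]
      rw [Finsupp.tsub_apply, Finsupp.single_apply, if_pos rfl]
      congr 1
      · rw [tsub_tsub, ← Finsupp.single_add]
      · rw [Nat.descFactorial_succ]
        push_cast
        ring

end Aux
lemma list_sum_single_apply (β : Fin n →₀ ℕ) (t : List (Fin n)) (i : Fin n) (hi : i ∉ t) :
    ((t.map fun j => Finsupp.single j (β j)).sum) i = 0 := by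
  induction t with
  | nil => simp
  | cons j t ih =>
      simp only [List.mem_cons, not_or] at hi
      simp [Finsupp.single_apply, Ne.symm hi.1, ih hi.2]

lemma listProd_pderiv_monomial (β : Fin n →₀ ℕ) (l : List (Fin n)) (hl : l.Nodup)
    (α : Fin n →₀ ℕ) (c : K) :
    ((l.map fun i =>
        ((pderiv i).toLinearMap : Module.End K (MvPolynomial (Fin n) K)) ^ (β i)).prod)
        (monomial α c) =
      monomial (α - (l.map fun i => Finsupp.single i (β i)).sum)
        (((l.map fun i => (α i).descFactorial (β i)).prod : ℕ) * c) := by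
  induction l with
  | nil => simp
  | cons i t ih =>
      rw [List.nodup_cons] at hl
      rw [List.map_cons, List.prod_cons, Module.End.mul_apply, List.map_cons, List.map_cons,
        ih hl.2, pderiv_pow_monomial, Finsupp.tsub_apply,
        list_sum_single_apply β t i hl.1, Nat.sub_zero]
      rw [List.sum_cons, List.prod_cons, tsub_tsub, add_comm]
      push_cast
      ring_nf

lemma pderivPow_monomial (β α : Fin n →₀ ℕ) (c : K) :
    pderivPow β (monomial α c) =
      monomial (α - β) (((∏ i, (α i).descFactorial (β i) : ℕ) : K) * c) := by
  rw [pderivPow, List.ofFn_eq_map, listProd_pderiv_monomial β _ (List.nodup_finRange n)]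
  have h1 : (List.map (fun i => Finsupp.single i (β i)) (List.finRange n)).sum = β := by
    rw [← Fin.sum_univ_def, Finsupp.univ_sum_single]
  have h2 : (List.map (fun i => (α i).descFactorial (β i)) (List.finRange n)).prod
      = ∏ i, (α i).descFactorial (β i) := (Fin.prod_univ_def _).symm
  rw [h1, h2]
/-- The shift homomorphism `p(x) ↦ p(x + ξ)`. -/
noncomputable def shiftHom (ξ : Fin n → K) :
    MvPolynomial (Fin n) K →ₐ[K] MvPolynomial (Fin n) K :=
  aeval fun i => X i + C (ξ i)

lemma shiftHom_X (ξ : Fin n → K) (i : Fin n) : shiftHom ξ (X i) = X i + C (ξ i) := by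
  simp [shiftHom]

lemma shiftHom_C (ξ : Fin n → K) (a : K) : shiftHom ξ (C a) = C a := by
  simp [shiftHom, algebraMap_eq]

lemma shiftHom_shiftHom (ξ η : Fin n → K) (p : MvPolynomial (Fin n) K) :
    shiftHom ξ (shiftHom η p) = shiftHom (ξ + η) p := by
  have : (shiftHom ξ).comp (shiftHom η) = shiftHom (ξ + η) := by
    apply MvPolynomial.algHom_ext
    intro i
    simp [shiftHom, algebraMap_eq, add_assoc]
  exact DFunLike.congr_fun this p

lemma shiftHom_neg_cancel (ξ : Fin n → K) (p : MvPolynomial (Fin n) K) :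
    shiftHom ξ (shiftHom (-ξ) p) = p := by
  rw [shiftHom_shiftHom, add_neg_cancel]
  have : shiftHom (0 : Fin n → K) = AlgHom.id K (MvPolynomial (Fin n) K) := by
    apply MvPolynomial.algHom_ext; intro i; simp [shiftHom]
  rw [this]; rfl

lemma shiftHom_neg_cancel' (ξ : Fin n → K) (p : MvPolynomial (Fin n) K) :
    shiftHom (-ξ) (shiftHom ξ p) = p := by
  have := shiftHom_neg_cancel (-ξ) p
  rwa [neg_neg] at this

lemma pderiv_shiftHom (ξ : Fin n → K) (j : Fin n) (p : MvPolynomial (Fin n) K) :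
    pderiv j (shiftHom ξ p) = shiftHom ξ (pderiv j p) := by
  induction p using MvPolynomial.induction_on with
  | C a => simp [shiftHom_C, pderiv_C]
  | add p q hp hq => simp [map_add, hp, hq]
  | mul_X p i hp =>
      classical
      have hXi : shiftHom ξ (pderiv j (X i)) = pderiv j (X i + C (ξ i)) := by
        by_cases h : i = j
        · subst h; simp [pderiv_X_self, map_add, pderiv_C]
        · simp [pderiv_X_of_ne h, map_add, pderiv_C]
      have hR : shiftHom ξ (pderiv j (p * X i)) =
          shiftHom ξ (pderiv j p) * (X i + C (ξ i)) + shiftHom ξ p * shiftHom ξ (pderiv j (X i)) := by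
        rw [pderiv_mul, map_add, map_mul, map_mul, shiftHom_X]
      rw [map_mul, shiftHom_X, pderiv_mul, hp, hR, hXi]

lemma pderivPow_shiftHom (ξ : Fin n → K) (β : Fin n →₀ ℕ) (p : MvPolynomial (Fin n) K) :
    pderivPow β (shiftHom ξ p) = shiftHom ξ (pderivPow β p) := by
  have hc : ∀ i : Fin n,
      Commute ((shiftHom ξ).toLinearMap : Module.End K (MvPolynomial (Fin n) K))
        (((pderiv i).toLinearMap : Module.End K (MvPolynomial (Fin n) K)) ^ (β i)) := by
    intro i
    refine Commute.pow_right ?_ _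
    exact LinearMap.ext fun q => (pderiv_shiftHom ξ i q).symm
  have : Commute ((shiftHom ξ).toLinearMap : Module.End K (MvPolynomial (Fin n) K))
      (pderivPow β) := by
    refine Commute.list_prod_right _ _ ?_
    intro x hx
    rw [List.mem_ofFn] at hx
    obtain ⟨i, rfl⟩ := hx
    exact hc i
  exact (DFunLike.congr_fun this p).symm

lemma eval_zero_shiftHom (ξ : Fin n → K) (p : MvPolynomial (Fin n) K) :
    eval (0 : Fin n → K) (shiftHom ξ p) = eval ξ p := by
  induction p using MvPolynomial.induction_on with
  | C a => simp [shiftHom_C]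
  | add p q hp hq => simp only [map_add, hp, hq]
  | mul_X p i hp =>
      simp only [map_mul, shiftHom_X, map_add, hp, eval_X, eval_C, Pi.zero_apply, zero_add]

lemma eval_zero_pderivPow (β : Fin n →₀ ℕ) (p : MvPolynomial (Fin n) K) :
    eval (0 : Fin n → K) (pderivPow β p) =
      (∏ i, ((β i).factorial : K)) * coeff β p := by
  induction p using MvPolynomial.induction_on' with
  | add p q hp hq => simp only [map_add, hp, hq, coeff_add]; ring
  | monomial α c =>
      rw [pderivPow_monomial, coeff_monomial]
      by_cases h : α = β
      · subst h
        simp only [tsub_self, if_pos rfl]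
        rw [eval_zero]
        simp [Nat.descFactorial_self, Nat.cast_prod]
      · rw [if_neg h]
        by_cases hle : β ≤ α
        · have hne : α - β ≠ 0 := by
            rw [Ne, tsub_eq_zero_iff_le]
            intro hba
            exact h (le_antisymm hba hle)
          rw [eval_zero]
          rw [mul_zero]
          simp [constantCoeff_monomial, hne]
        · have : ∃ i, α i < β i := by
            by_contra hcon
            push_neg at hcon
            exact hle fun i => hcon i
          obtain ⟨i, hi⟩ := this
          have : (∏ j, (α j).descFactorial (β j)) = 0 :=
            Finset.prod_eq_zero (Finset.mem_univ i)
              (Nat.descFactorial_eq_zero_iff_lt.mpr hi)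
          rw [this]
          simp
/-- Product of factorials `β! = ∏ (β i)!` as an element of `K`. -/
noncomputable def bfac (β : Fin n →₀ ℕ) : K := ∏ i, ((β i).factorial : K)

lemma bfac_ne_zero [CharZero K] (β : Fin n →₀ ℕ) : (bfac β : K) ≠ 0 := by
  rw [bfac, Finset.prod_ne_zero_iff]
  intro i _
  exact_mod_cast (β i).factorial_ne_zero

lemma aeval_eq_eval (ξ : Fin n → K) (p : MvPolynomial (Fin n) K) :
    aeval ξ p = eval ξ p := by
  rw [← coe_aeval_eq_eval]; rfl

/-- Key formula for the polynomial-exponential dual in terms of shifted coefficients. -/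
lemma polyExpDual_apply (ω : MvPolynomial (Fin n) K) (ξ : Fin n → K)
    (p : MvPolynomial (Fin n) K) :
    polyExpDual ω ξ p =
      ∑ β ∈ ω.support, ω.coeff β * (bfac β * coeff β (shiftHom ξ p)) := by
  rw [polyExpDual, LinearMap.comp_apply, diffOp, LinearMap.sum_apply]
  rw [evalDual, AlgHom.toLinearMap_apply, aeval_eq_eval, map_sum]
  refine Finset.sum_congr rfl fun β _ => ?_
  rw [LinearMap.smul_apply, smul_eval]
  congr 1
  rw [← eval_zero_shiftHom ξ, ← pderivPow_shiftHom, eval_zero_pderivPow, bfac]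

lemma polyExpDual_apply_superset {ω : MvPolynomial (Fin n) K} {s : Finset (Fin n →₀ ℕ)}
    (hs : ω.support ⊆ s) (ξ : Fin n → K) (p : MvPolynomial (Fin n) K) :
    polyExpDual ω ξ p =
      ∑ β ∈ s, ω.coeff β * (bfac β * coeff β (shiftHom ξ p)) := by
  rw [polyExpDual_apply]
  refine Finset.sum_subset hs fun β _ hβ => ?_
  rw [notMem_support_iff.mp hβ, zero_mul]

/-- `polyExpDual` as a linear map in `ω`. -/
noncomputable def polyExpDualHom (ξ : Fin n → K) :
    MvPolynomial (Fin n) K →ₗ[K] Module.Dual K (MvPolynomial (Fin n) K) where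
  toFun ω := polyExpDual ω ξ
  map_add' ω ω' := by
    classical
    refine LinearMap.ext fun p => ?_
    show polyExpDual (ω + ω') ξ p = (polyExpDual ω ξ + polyExpDual ω' ξ) p
    rw [LinearMap.add_apply,
      polyExpDual_apply_superset (support_add (p := ω) (q := ω')) ξ p,
      polyExpDual_apply_superset Finset.subset_union_left ξ p,
      polyExpDual_apply_superset Finset.subset_union_right ξ p,
      ← Finset.sum_add_distrib]
    refine Finset.sum_congr rfl fun β _ => ?_
    rw [coeff_add]; ring
  map_smul' c ω := by
    refine LinearMap.ext fun p => ?_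
    show polyExpDual (c • ω) ξ p = (c • polyExpDual ω ξ) p
    rw [LinearMap.smul_apply,
      polyExpDual_apply_superset (support_smul (a := c) (f := ω)) ξ p,
      polyExpDual_apply ω ξ p, Finset.smul_sum]
    refine Finset.sum_congr rfl fun β _ => ?_
    rw [smul_eq_mul, coeff_smul, smul_eq_mul]; ring

lemma polyExpDual_shift_monomial (ω : MvPolynomial (Fin n) K) (ξ : Fin n → K)
    (β : Fin n →₀ ℕ) :
    polyExpDual ω ξ (shiftHom (-ξ) (monomial β 1)) = ω.coeff β * bfac β := by
  rw [polyExpDual_apply]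
  have hc : ∀ γ, coeff γ (shiftHom ξ (shiftHom (-ξ) (monomial β (1:K)))) =
      if β = γ then 1 else 0 := by
    intro γ; rw [shiftHom_neg_cancel, coeff_monomial]
  by_cases hb : β ∈ ω.support
  · rw [Finset.sum_eq_single_of_mem β hb]
    · rw [hc, if_pos rfl, mul_one]
    · intro γ _ hγ
      rw [hc, if_neg (Ne.symm hγ), mul_zero, mul_zero]
  · rw [Finset.sum_eq_zero, notMem_support_iff.mp hb, zero_mul]
    intro γ hγ
    rw [hc, if_neg (by rintro rfl; exact hb hγ), mul_zero, mul_zero]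

lemma eq_zero_of_polyExpDual_eq_zero [CharZero K] {ω : MvPolynomial (Fin n) K}
    {ξ : Fin n → K} (h : polyExpDual ω ξ = 0) : ω = 0 := by
  ext β
  have := polyExpDual_shift_monomial ω ξ β
  rw [h, LinearMap.zero_apply] at this
  have h2 := this.symm
  rw [mul_eq_zero] at h2
  rcases h2 with h2 | h2
  · simpa using h2
  · exact absurd h2 (bfac_ne_zero β)
/-- Total degree of an exponent vector. -/
def tdeg (β : Fin n →₀ ℕ) : ℕ := β.sum fun _ k => k

lemma tdeg_add (β γ : Fin n →₀ ℕ) : tdeg (β + γ) = tdeg β + tdeg γ := by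
  unfold tdeg
  exact Finsupp.sum_add_index' (fun _ => rfl) (fun _ _ _ => rfl)

lemma le_tdeg (β : Fin n →₀ ℕ) (i : Fin n) : β i ≤ tdeg β := by
  by_cases h : β i = 0
  · simp [h]
  · exact Finset.single_le_sum (f := fun j => β j) (fun _ _ => Nat.zero_le _)
      (Finsupp.mem_support_iff.mpr h)

lemma tdeg_eq_zero {β : Fin n →₀ ℕ} (h : tdeg β = 0) : β = 0 := by
  ext i
  have := le_tdeg β i
  simp only [Finsupp.coe_zero, Pi.zero_apply]
  omega

/-- The ideal of polynomials vanishing to order `N` at `ξ`. -/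
def ordIdeal (ξ : Fin n → K) (N : ℕ) : Ideal (MvPolynomial (Fin n) K) where
  carrier := {p | ∀ β : Fin n →₀ ℕ, tdeg β < N → coeff β (shiftHom ξ p) = 0}
  zero_mem' := by intro β _; simp
  add_mem' := by
    intro a b ha hb β hβ
    rw [map_add, coeff_add, ha β hβ, hb β hβ, add_zero]
  smul_mem' := by
    intro c p hp β hβ
    rw [smul_eq_mul, map_mul, coeff_mul]
    refine Finset.sum_eq_zero fun x hx => ?_
    rw [Finset.HasAntidiagonal.mem_antidiagonal] at hx
    have h2 : tdeg x.2 < N := by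
      have := tdeg_add x.1 x.2
      rw [hx] at this
      omega
    rw [hp x.2 h2, mul_zero]

lemma mem_ordIdeal {ξ : Fin n → K} {N : ℕ} {p : MvPolynomial (Fin n) K} :
    p ∈ ordIdeal ξ N ↔ ∀ β : Fin n →₀ ℕ, tdeg β < N → coeff β (shiftHom ξ p) = 0 :=
  Iff.rfl

lemma mul_mem_ordIdeal {ξ : Fin n → K} {a b : ℕ} {p q : MvPolynomial (Fin n) K}
    (hp : p ∈ ordIdeal ξ a) (hq : q ∈ ordIdeal ξ b) : p * q ∈ ordIdeal ξ (a + b) := by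
  intro β hβ
  rw [map_mul, coeff_mul]
  refine Finset.sum_eq_zero fun x hx => ?_
  rw [Finset.HasAntidiagonal.mem_antidiagonal] at hx
  have hsum : tdeg x.1 + tdeg x.2 < a + b := by
    have := tdeg_add x.1 x.2
    rw [hx] at this
    omega
  by_cases h1 : tdeg x.1 < a
  · rw [hp x.1 h1, zero_mul]
  · rw [hq x.2 (by omega), mul_zero]

lemma mem_ordIdeal_one {ξ : Fin n → K} {p : MvPolynomial (Fin n) K}
    (hp : eval ξ p = 0) : p ∈ ordIdeal ξ 1 := by
  intro β hβ
  have : β = 0 := tdeg_eq_zero (by omega)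
  subst this
  have : coeff 0 (shiftHom ξ p) = eval (0 : Fin n → K) (shiftHom ξ p) := by
    rw [eval_zero]; rfl
  rw [this, eval_zero_shiftHom, hp]

lemma pow_mem_ordIdeal {ξ : Fin n → K} {p : MvPolynomial (Fin n) K}
    (hp : eval ξ p = 0) (N : ℕ) : p ^ N ∈ ordIdeal ξ N := by
  induction N with
  | zero => intro β hβ; omega
  | succ N ih =>
      rw [pow_succ]
      exact mul_mem_ordIdeal ih (mem_ordIdeal_one hp)

/-- The finite set of exponents of total degree `< N`. -/
noncomputable def degFinset (n N : ℕ) : Finset (Fin n →₀ ℕ) :=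
  ((Finset.univ : Finset (Fin n → Fin (N+1))).image
    fun f => Finsupp.equivFunOnFinite.symm fun i => (f i : ℕ)).filter fun β => tdeg β < N

lemma mem_degFinset {N : ℕ} {β : Fin n →₀ ℕ} : β ∈ degFinset n N ↔ tdeg β < N := by
  constructor
  · intro h
    exact (Finset.mem_filter.mp h).2
  · intro h
    refine Finset.mem_filter.mpr ⟨?_, h⟩
    refine Finset.mem_image.mpr ⟨fun i => ⟨β i, ?_⟩, Finset.mem_univ _, ?_⟩
    · have := le_tdeg β i; omega
    · exact Finsupp.equivFunOnFinite.symm_apply_eq.mpr rfl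

lemma polyExpDual_vanish_ordIdeal {ω : MvPolynomial (Fin n) K} {ξ : Fin n → K} {N : ℕ}
    (hω : ∀ β ∈ ω.support, tdeg β < N) {p : MvPolynomial (Fin n) K}
    (hp : p ∈ ordIdeal ξ N) : polyExpDual ω ξ p = 0 := by
  rw [polyExpDual_apply]
  refine Finset.sum_eq_zero fun β hβ => ?_
  rw [hp β (hω β hβ), mul_zero, mul_zero]
/-- Any linear form vanishing on `ordIdeal ξ N` is a polynomial-exponential form. -/
lemma exists_polyExpDual_of_vanish [CharZero K] {ξ : Fin n → K} {N : ℕ}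
    (Λ : Module.Dual K (MvPolynomial (Fin n) K))
    (hΛ : ∀ p ∈ ordIdeal ξ N, Λ p = 0) :
    ∃ ω : MvPolynomial (Fin n) K, (∀ β ∈ ω.support, tdeg β < N) ∧ Λ = polyExpDual ω ξ := by
  classical
  set M : Module.Dual K (MvPolynomial (Fin n) K) :=
    Λ ∘ₗ (shiftHom (-ξ)).toLinearMap with hMdef
  have hMval : ∀ q, M q = Λ (shiftHom (-ξ) q) := fun q => rfl
  have hMhigh : ∀ α : Fin n →₀ ℕ, N ≤ tdeg α → M (monomial α 1) = 0 := by
    intro α hα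
    rw [hMval]
    refine hΛ _ fun β hβ => ?_
    rw [shiftHom_neg_cancel, coeff_monomial, if_neg]
    rintro rfl; omega
  set ω : MvPolynomial (Fin n) K :=
    ∑ β ∈ degFinset n N, (M (monomial β 1) / bfac β) • monomial β (1:K) with hωdef
  have hcoeff : ∀ γ, coeff γ ω =
      if γ ∈ degFinset n N then M (monomial γ 1) / bfac γ else 0 := by
    intro γ
    rw [hωdef, coeff_sum]
    rw [Finset.sum_congr rfl (fun β _ => by
      rw [coeff_smul, coeff_monomial, smul_eq_mul, mul_ite, mul_one, mul_zero])]
    rw [Finset.sum_ite_eq' (degFinset n N) γ (fun β => M (monomial β 1) / bfac β)]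
  have hsupp : ω.support ⊆ degFinset n N := by
    intro γ hγ
    by_contra h
    exact (notMem_support_iff.mpr (by rw [hcoeff γ, if_neg h])).elim hγ
  refine ⟨ω, fun β hβ => mem_degFinset.mp (hsupp hβ), ?_⟩
  have key : ∀ q, M q = ∑ β ∈ degFinset n N, M (monomial β 1) * coeff β q := by
    intro q
    induction q using MvPolynomial.induction_on' with
    | add p q hp hq =>
        rw [map_add, hp, hq, ← Finset.sum_add_distrib]
        exact Finset.sum_congr rfl fun β _ => by rw [coeff_add]; ring
    | monomial α c =>
        have hmon : monomial α c = c • monomial α (1:K) := by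
          rw [smul_monomial, smul_eq_mul, mul_one]
        rw [hmon, map_smul, smul_eq_mul]
        rw [Finset.sum_congr rfl (fun β _ => by
          rw [coeff_smul, smul_eq_mul, coeff_monomial, mul_ite, mul_one, mul_zero, mul_ite,
            mul_zero])]
        rw [Finset.sum_ite_eq (degFinset n N) α (fun β => M (monomial β 1) * c)]
        by_cases hα : α ∈ degFinset n N
        · rw [if_pos hα]; ring
        · rw [if_neg hα, hMhigh α (le_of_not_gt fun h => hα (mem_degFinset.mpr h)), mul_zero]
  refine LinearMap.ext fun p => ?_
  have h1 : Λ p = M (shiftHom ξ p) := by rw [hMval, shiftHom_neg_cancel']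
  rw [h1, key, polyExpDual_apply_superset hsupp]
  refine Finset.sum_congr rfl fun β hβ => ?_
  rw [hcoeff β, if_pos hβ]
  have hb := bfac_ne_zero (K := K) β
  field_simp
/-- A "partition of unity" up to order `N` at finitely many distinct points. -/
lemma exists_partition {r' : ℕ} {ξ : Fin r' → Fin n → K} (hξ : Function.Injective ξ)
    (N : ℕ) :
    ∃ P : Fin r' → MvPolynomial (Fin n) K,
      (∀ i j, j ≠ i → P i ∈ ordIdeal (ξ j) N) ∧
      (∀ i, (1 : MvPolynomial (Fin n) K) - P i ∈ ordIdeal (ξ i) N) := by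
  classical
  have hpt : ∀ i j : Fin r', ∃ g : MvPolynomial (Fin n) K,
      i ≠ j → eval (ξ i) g = 1 ∧ eval (ξ j) g = 0 := by
    intro i j
    by_cases hij : i = j
    · exact ⟨1, fun hne => absurd hij hne⟩
    · have hne : ξ i ≠ ξ j := fun h => hij (hξ h)
      have : ∃ k, ξ i k ≠ ξ j k := by
        by_contra hcon
        push_neg at hcon
        exact hne (funext hcon)
      obtain ⟨k, hk⟩ := this
      have hk' : ξ i k - ξ j k ≠ 0 := sub_ne_zero.mpr hk
      refine ⟨C (ξ i k - ξ j k)⁻¹ * (X k - C (ξ j k)), fun _ => ⟨?_, ?_⟩⟩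
      · simp only [map_mul, eval_C, map_sub, eval_X]
        exact inv_mul_cancel₀ hk'
      · simp only [map_mul, eval_C, map_sub, eval_X]
        rw [sub_self, mul_zero]
  choose g hg using hpt
  set q : Fin r' → MvPolynomial (Fin n) K :=
    fun i => ∏ j ∈ Finset.univ.erase i, (g i j) ^ N with hqdef
  have hq1 : ∀ i, eval (ξ i) (q i) = 1 := by
    intro i
    rw [hqdef, map_prod]
    refine Finset.prod_eq_one fun j hj => ?_
    have hji : j ≠ i := (Finset.mem_erase.mp hj).1
    rw [map_pow, (hg i j (Ne.symm hji)).1, one_pow]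
  have hq0 : ∀ i j, j ≠ i → q i ∈ ordIdeal (ξ j) N := by
    intro i j hji
    rw [hqdef]
    dsimp only
    rw [← Finset.mul_prod_erase _ _ (Finset.mem_erase.mpr ⟨hji, Finset.mem_univ j⟩)]
    exact Ideal.mul_mem_right _ _ (pow_mem_ordIdeal (hg i j (Ne.symm hji)).2 N)
  refine ⟨fun i => q i * (∑ k ∈ Finset.range N, (1 - q i) ^ k), fun i j hji =>
    Ideal.mul_mem_right _ _ (hq0 i j hji), fun i => ?_⟩
  have hgeom : (1 : MvPolynomial (Fin n) K) -
      q i * (∑ k ∈ Finset.range N, (1 - q i) ^ k) = (1 - q i) ^ N := by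
    have h := geom_sum_mul (1 - q i) N
    linear_combination h
  rw [hgeom]
  refine pow_mem_ordIdeal ?_ N
  rw [map_sub, hq1 i, map_one, sub_self]
/-- Linear independence of polynomial-exponential forms at distinct points. -/
lemma eq_zero_of_sum_polyExpDual [CharZero K] {r' : ℕ} {ξ : Fin r' → Fin n → K}
    (hξ : Function.Injective ξ) {ω : Fin r' → MvPolynomial (Fin n) K}
    (hsum : ∑ i, polyExpDual (ω i) (ξ i) = 0) (i : Fin r') : ω i = 0 := by
  classical
  set N : ℕ := (Finset.univ.sup fun j => (ω j).support.sup tdeg) + 1 with hN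
  have hdeg : ∀ j, ∀ β ∈ (ω j).support, tdeg β < N := by
    intro j β hβ
    have h1 : tdeg β ≤ (ω j).support.sup tdeg := Finset.le_sup hβ
    have h2 : (ω j).support.sup tdeg ≤ Finset.univ.sup fun j => (ω j).support.sup tdeg :=
      Finset.le_sup (f := fun j => (ω j).support.sup tdeg) (Finset.mem_univ j)
    omega
  obtain ⟨P, hP0, hP1⟩ := exists_partition hξ N
  refine eq_zero_of_polyExpDual_eq_zero (ξ := ξ i) ?_
  refine LinearMap.ext fun p => ?_
  have h0 := DFunLike.congr_fun hsum (P i * p)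
  rw [LinearMap.sum_apply, LinearMap.zero_apply] at h0
  have hz : ∀ j ∈ Finset.univ, j ≠ i → polyExpDual (ω j) (ξ j) (P i * p) = 0 := fun j _ hj =>
    polyExpDual_vanish_ordIdeal (hdeg j) (Ideal.mul_mem_right p _ (hP0 i j hj))
  rw [Finset.sum_eq_single_of_mem i (Finset.mem_univ i) hz] at h0
  rw [LinearMap.zero_apply]
  have h2 : polyExpDual (ω i) (ξ i) ((1 - P i) * p) = 0 :=
    polyExpDual_vanish_ordIdeal (hdeg i) (Ideal.mul_mem_right p _ (hP1 i))
  have h3 : P i * p = p - (1 - P i) * p := by ring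
  rw [h3, map_sub, h2, sub_zero] at h0
  exact h0

/-- Decomposition of a linear form vanishing on an ideal containing `⋂ ordIdeal (ξ j) N`. -/
lemma exists_decomposition [CharZero K] {r' : ℕ} {ξ : Fin r' → Fin n → K}
    (hξ : Function.Injective ξ) {N : ℕ} {J : Ideal (MvPolynomial (Fin n) K)}
    (hJ : ∀ p : MvPolynomial (Fin n) K, (∀ j, p ∈ ordIdeal (ξ j) N) → p ∈ J)
    (Λ : Module.Dual K (MvPolynomial (Fin n) K)) (hΛ : ∀ p ∈ J, Λ p = 0) :
    ∃ ω : Fin r' → MvPolynomial (Fin n) K,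
      (∀ i, ∀ p ∈ J, polyExpDual (ω i) (ξ i) p = 0) ∧
      Λ = ∑ i, polyExpDual (ω i) (ξ i) := by
  classical
  obtain ⟨P, hP0, hP1⟩ := exists_partition hξ N
  have hvan : ∀ i, ∀ q ∈ ordIdeal (ξ i) N, Λ (P i * q) = 0 := by
    intro i q hq
    refine hΛ _ (hJ _ fun j => ?_)
    by_cases hji : j = i
    · subst hji; exact Ideal.mul_mem_left _ _ hq
    · exact Ideal.mul_mem_right _ _ (hP0 i j hji)
  have hex : ∀ i, ∃ ω : MvPolynomial (Fin n) K, (∀ β ∈ ω.support, tdeg β < N) ∧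
      (Λ ∘ₗ LinearMap.mulLeft K (P i)) = polyExpDual ω (ξ i) := by
    intro i
    refine exists_polyExpDual_of_vanish _ fun q hq => ?_
    exact hvan i q hq
  choose ω hωdeg hωeq using hex
  have happ : ∀ i q, polyExpDual (ω i) (ξ i) q = Λ (P i * q) := by
    intro i q
    rw [← hωeq i]
    rfl
  refine ⟨ω, fun i p hp => by rw [happ]; exact hΛ _ (Ideal.mul_mem_left _ _ hp), ?_⟩
  refine LinearMap.ext fun p => ?_
  rw [LinearMap.sum_apply, Finset.sum_congr rfl fun i _ => happ i p]
  have hone : (1 : MvPolynomial (Fin n) K) - ∑ i, P i ∈ J := by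
    refine hJ _ fun j => ?_
    have hsplit : (1 : MvPolynomial (Fin n) K) - ∑ i, P i
        = (1 - P j) - ∑ i ∈ Finset.univ.erase j, P i := by
      rw [← Finset.add_sum_erase _ _ (Finset.mem_univ j)]
      ring
    rw [hsplit]
    exact Submodule.sub_mem _ (hP1 j) (Submodule.sum_mem _ fun i hi =>
      hP0 i j (Ne.symm (Finset.mem_erase.mp hi).1))
  have hsub : Λ p - ∑ i, Λ (P i * p) = Λ ((1 - ∑ i, P i) * p) := by
    rw [sub_mul, one_mul, map_sub, Finset.sum_mul, map_sum]
  have h2 : Λ ((1 - ∑ i, P i) * p) = 0 := hΛ _ (Ideal.mul_mem_right _ _ hone)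
  exact sub_eq_zero.mp (by rw [hsub, h2])
lemma finset_inf_pow_le {R : Type*} [CommRing R] {ι : Type*} [DecidableEq ι] (s : Finset ι)
    (M : ι → Ideal R)
    (hcop : ∀ i ∈ s, ∀ j ∈ s, i ≠ j → IsCoprime (M i) (M j)) (N : ℕ) :
    s.inf (fun j => (M j) ^ N) ≤ (s.inf M) ^ N := by
  induction s using Finset.induction_on with
  | empty => simp [Ideal.top_pow]
  | @insert a t ha ih =>
      have hceach : IsCoprime (M a) (t.inf M) := by
        rw [Finset.inf_eq_iInf]
        exact Ideal.isCoprime_biInf fun j hj =>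
          hcop a (Finset.mem_insert_self a t) j (Finset.mem_insert_of_mem hj)
            (fun h => ha (h ▸ hj))
      rw [Finset.inf_insert, Finset.inf_insert]
      calc M a ^ N ⊓ t.inf (fun j => M j ^ N)
          ≤ M a ^ N ⊓ (t.inf M) ^ N := inf_le_inf_left _ (ih fun i hi j hj hij =>
            hcop i (Finset.mem_insert_of_mem hi) j (Finset.mem_insert_of_mem hj) hij)
        _ = M a ^ N * (t.inf M) ^ N := Ideal.inf_eq_mul_of_isCoprime (hceach.pow)
        _ = (M a * t.inf M) ^ N := (mul_pow _ _ _).symm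
        _ ≤ (M a ⊓ t.inf M) ^ N := Ideal.pow_right_mono Ideal.mul_le_inf N

/-- The maximal ideal at a point, generated by the linear forms. -/
noncomputable def linIdeal (ξ : Fin n → K) : Ideal (MvPolynomial (Fin n) K) :=
  Ideal.span (Set.range fun i => X i - C (ξ i))

lemma eval_eq_zero_of_mem_linIdeal {ξ : Fin n → K} {p : MvPolynomial (Fin n) K}
    (hp : p ∈ linIdeal ξ) : eval ξ p = 0 := by
  have hle : linIdeal ξ ≤ RingHom.ker (eval ξ) := by
    rw [linIdeal, Ideal.span_le]
    rintro _ ⟨i, rfl⟩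
    simp [RingHom.mem_ker]
  exact hle hp

lemma prod_pow_mem_linIdeal_pow (ξ : Fin n → K) (α : Fin n →₀ ℕ) :
    (∏ i, (X i - C (ξ i)) ^ (α i)) ∈ (linIdeal ξ) ^ (tdeg α) := by
  have htd : tdeg α = ∑ i, α i := Finsupp.sum_fintype _ _ fun _ => rfl
  rw [htd]
  have : ∀ (s : Finset (Fin n)),
      (∏ i ∈ s, (X i - C (ξ i)) ^ (α i)) ∈ (linIdeal ξ) ^ (∑ i ∈ s, α i) := by
    intro s
    induction s using Finset.induction_on with
    | empty => simp [Ideal.one_eq_top]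
    | @insert a t ha ih =>
        rw [Finset.prod_insert ha, Finset.sum_insert ha, pow_add]
        refine Ideal.mul_mem_mul ?_ ih
        have hXa : (X a - C (ξ a) : MvPolynomial (Fin n) K) ∈ linIdeal ξ :=
          Ideal.subset_span ⟨a, rfl⟩
        exact Ideal.pow_mem_pow hXa _
  exact this Finset.univ

lemma ordIdeal_le_linIdeal_pow (ξ : Fin n → K) (N : ℕ) :
    ordIdeal ξ N ≤ (linIdeal ξ) ^ N := by
  intro g hg
  have hrepr : g = ∑ α ∈ (shiftHom ξ g).support,
      shiftHom (-ξ) (monomial α (coeff α (shiftHom ξ g))) := by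
    rw [← map_sum, support_sum_monomial_coeff (shiftHom ξ g), shiftHom_neg_cancel']
  rw [hrepr]
  refine Submodule.sum_mem _ fun α hα => ?_
  have hdeg : N ≤ tdeg α := by
    by_contra h
    exact (notMem_support_iff.mpr (hg α (by omega))).elim hα
  have hsm : shiftHom (-ξ) (monomial α (coeff α (shiftHom ξ g)))
      = C (coeff α (shiftHom ξ g)) * ∏ i, (X i - C (ξ i)) ^ (α i) := by
    rw [shiftHom, aeval_monomial, Finsupp.prod_fintype _ _ fun _ => pow_zero _]
    congr 1
    refine Finset.prod_congr rfl fun i _ => ?_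
    congr 1
    rw [Pi.neg_apply, map_neg, ← sub_eq_add_neg]
  rw [hsm]
  exact Ideal.mul_mem_left _ _
    (Ideal.pow_le_pow_right hdeg (prod_pow_mem_linIdeal_pow ξ α))

lemma linIdeal_isCoprime {ξ η : Fin n → K} (h : ξ ≠ η) :
    IsCoprime (linIdeal ξ) (linIdeal η) := by
  rw [Ideal.isCoprime_iff_sup_eq]
  have : ∃ k, ξ k ≠ η k := by
    by_contra hc; push_neg at hc; exact h (funext hc)
  obtain ⟨k, hk⟩ := this
  rw [Ideal.eq_top_iff_one]
  have h1 : (X k - C (ξ k) : MvPolynomial (Fin n) K) ∈ linIdeal ξ ⊔ linIdeal η :=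
    Ideal.mem_sup_left (Ideal.subset_span ⟨k, rfl⟩)
  have h2 : (X k - C (η k) : MvPolynomial (Fin n) K) ∈ linIdeal ξ ⊔ linIdeal η :=
    Ideal.mem_sup_right (Ideal.subset_span ⟨k, rfl⟩)
  have h3 : (C ((η k - ξ k)⁻¹) : MvPolynomial (Fin n) K) *
      ((X k - C (ξ k)) - (X k - C (η k))) ∈ linIdeal ξ ⊔ linIdeal η :=
    Ideal.mul_mem_left _ _ (Submodule.sub_mem _ h1 h2)
  have heq : (C ((η k - ξ k)⁻¹) : MvPolynomial (Fin n) K) *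
      ((X k - C (ξ k)) - (X k - C (η k))) = 1 := by
    have : (X k - C (ξ k) : MvPolynomial (Fin n) K) - (X k - C (η k)) = C (η k - ξ k) := by
      rw [map_sub]; ring
    rw [this, ← map_mul, inv_mul_cancel₀ (sub_ne_zero.mpr fun hc => hk hc.symm), map_one]
  rwa [heq] at h3
lemma coeff_pderiv (j : Fin n) (ω : MvPolynomial (Fin n) K) (β : Fin n →₀ ℕ) :
    coeff β (pderiv j ω) = ω.coeff (β + Finsupp.single j 1) * ((β j : K) + 1) := by
  induction ω using MvPolynomial.induction_on' with
  | add p q hp hq => rw [map_add, coeff_add, hp, hq, coeff_add, add_mul]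
  | monomial s a =>
      rw [pderiv_monomial, coeff_monomial, coeff_monomial]
      by_cases hs : s = β + Finsupp.single j 1
      · subst hs
        rw [if_pos (add_tsub_cancel_right _ _), if_pos rfl]
        congr 1
        rw [Finsupp.add_apply, Finsupp.single_eq_same]
        push_cast
        ring
      · rw [if_neg hs]
        by_cases hj : s j = 0
        · by_cases hsub : s - Finsupp.single j 1 = β
          · rw [if_pos hsub, hj]
            push_cast
            rw [mul_zero, zero_mul]
          · rw [if_neg hsub, zero_mul]
        · by_cases hsub : s - Finsupp.single j 1 = β
          · exfalso
            apply hs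
            have hle : Finsupp.single j 1 ≤ s := by
              rw [Finsupp.single_le_iff]
              omega
            rw [← hsub, tsub_add_cancel_of_le hle]
          · rw [if_neg hsub, zero_mul]

lemma bfac_add_single (β : Fin n →₀ ℕ) (j : Fin n) :
    bfac (K := K) (β + Finsupp.single j 1) = ((β j : K) + 1) * bfac β := by
  rw [bfac, bfac, ← Finset.mul_prod_erase _ _ (Finset.mem_univ j),
    ← Finset.mul_prod_erase _ (fun i => ((β i).factorial : K)) (Finset.mem_univ j)]
  have h1 : (((β + Finsupp.single j 1) : Fin n →₀ ℕ) j).factorial = (β j + 1) * (β j).factorial := by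
    rw [Finsupp.add_apply, Finsupp.single_eq_same, Nat.factorial_succ]
  have h2 : ∀ i ∈ Finset.univ.erase j,
      ((((β + Finsupp.single j 1) : Fin n →₀ ℕ) i).factorial : K) = ((β i).factorial : K) := by
    intro i hi
    rw [Finsupp.add_apply, Finsupp.single_eq_of_ne' (Ne.symm (Finset.mem_erase.mp hi).1),
      add_zero]
  rw [h1, Finset.prod_congr rfl h2]
  push_cast
  ring

/-- Two linear forms agreeing on all shifted monomials are equal. -/
lemma dual_ext {Λ₁ Λ₂ : Module.Dual K (MvPolynomial (Fin n) K)} (ξ : Fin n → K)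
    (h : ∀ β, Λ₁ (shiftHom (-ξ) (monomial β 1)) = Λ₂ (shiftHom (-ξ) (monomial β 1))) :
    Λ₁ = Λ₂ := by
  have key : ∀ q, Λ₁ (shiftHom (-ξ) q) = Λ₂ (shiftHom (-ξ) q) := by
    intro q
    induction q using MvPolynomial.induction_on' with
    | monomial α c =>
        rw [show monomial α c = c • monomial α (1:K) by rw [smul_monomial, smul_eq_mul, mul_one]]
        simp only [map_smul]
        rw [h α]
    | add p q hp hq => rw [map_add, map_add, map_add, hp, hq]
  refine LinearMap.ext fun p => ?_
  have := key (shiftHom ξ p)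
  rwa [shiftHom_neg_cancel'] at this

lemma polyExpDual_pderiv (ω : MvPolynomial (Fin n) K) (ξ : Fin n → K) (j : Fin n) :
    polyExpDual (pderiv j ω) ξ =
      polyExpDual ω ξ ∘ₗ LinearMap.mulLeft K (X j - C (ξ j)) := by
  refine dual_ext ξ fun β => ?_
  have hmul : (X j - C (ξ j)) * shiftHom (-ξ) (monomial β (1:K)) =
      shiftHom (-ξ) (monomial (β + Finsupp.single j 1) 1) := by
    have hX : shiftHom (-ξ) (X j) = X j - C (ξ j) := by
      rw [shiftHom_X, Pi.neg_apply, map_neg, ← sub_eq_add_neg]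
    have : monomial (β + Finsupp.single j 1) (1:K) = X j * monomial β 1 := by
      rw [X, monomial_mul, one_mul, add_comm]
    rw [this, map_mul, hX]
  rw [LinearMap.comp_apply]
  have : LinearMap.mulLeft K (X j - C (ξ j)) (shiftHom (-ξ) (monomial β (1:K)))
      = shiftHom (-ξ) (monomial (β + Finsupp.single j 1) 1) := by
    rw [LinearMap.mulLeft_apply, hmul]
  rw [this, polyExpDual_shift_monomial, polyExpDual_shift_monomial, coeff_pderiv,
    bfac_add_single]
  ring

/-- For some `N`, everything vanishing to order `N` at all the points lies in `I`. -/
lemma exists_N_ord_le [IsAlgClosed K] {r' : ℕ} (I : Ideal (MvPolynomial (Fin n) K))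
    {ξ : Fin r' → Fin n → K} (hξ : Function.Injective ξ)
    (hzero : Set.range ξ = {x : Fin n → K | ∀ p ∈ I, aeval x p = 0}) :
    ∃ N : ℕ, ∀ p : MvPolynomial (Fin n) K, (∀ j, p ∈ ordIdeal (ξ j) N) → p ∈ I := by
  classical
  obtain ⟨N, hN⟩ := Ideal.exists_radical_pow_le_of_fg I (IsNoetherian.noetherian _)
  refine ⟨N, fun p hp => ?_⟩
  have hM : (Finset.univ.inf fun j => linIdeal (ξ j)) ≤ I.radical := by
    rw [← vanishingIdeal_zeroLocus_eq_radical (K := K) I]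
    intro g hg
    rw [mem_vanishingIdeal_iff]
    intro x hx
    have hx' : x ∈ Set.range ξ := by
      rw [hzero]
      intro q hq
      rw [aeval_eq_eval]
      exact hx q hq
    obtain ⟨j, rfl⟩ := hx'
    have hgj : g ∈ linIdeal (ξ j) :=
      (Finset.inf_le (f := fun j => linIdeal (ξ j)) (Finset.mem_univ j)) hg
    exact eval_eq_zero_of_mem_linIdeal hgj
  have h1 : p ∈ Finset.univ.inf fun j => (linIdeal (ξ j)) ^ N := by
    rw [Finset.inf_eq_iInf]
    rw [Submodule.mem_iInf]
    intro j
    rw [Submodule.mem_iInf]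
    intro _
    exact ordIdeal_le_linIdeal_pow (ξ j) N (hp j)
  have h2 := finset_inf_pow_le Finset.univ (fun j => linIdeal (ξ j))
    (fun i _ j _ hij => linIdeal_isCoprime fun h => hij (hξ h)) N h1
  exact hN (Ideal.pow_right_mono hM N h2)
end PolyExp

/-- The inverse system `D_ξ(I)`: polynomials `ω` such that `(ω(∂)p)(ξ) = 0` for all `p ∈ I`. -/
def inverseSystem {K : Type*} [Field K] {n : ℕ}
    (I : Ideal (MvPolynomial (Fin n) K)) (ξ : Fin n → K) : Set (MvPolynomial (Fin n) K) :=
  {ω | ∀ p ∈ I, PolyExp.polyExpDual ω ξ p = 0}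

open PolyExp

/-- `inverseSystem` as a submodule. -/
noncomputable def invSysSubmodule {K : Type*} [Field K] {n : ℕ}
    (I : Ideal (MvPolynomial (Fin n) K)) (ξ : Fin n → K) :
    Submodule K (MvPolynomial (Fin n) K) where
  carrier := inverseSystem I ξ
  zero_mem' := by
    intro p _
    rw [show polyExpDual (0 : MvPolynomial (Fin n) K) ξ = 0 from map_zero (polyExpDualHom ξ)]
    rfl
  add_mem' := by
    intro a b ha hb p hp
    rw [show polyExpDual (a + b) ξ = polyExpDual a ξ + polyExpDual b ξ from
      map_add (polyExpDualHom ξ) a b, LinearMap.add_apply, ha p hp, hb p hp, add_zero]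
  smul_mem' := by
    intro c ω hω p hp
    rw [show polyExpDual (c • ω) ξ = c • polyExpDual ω ξ from map_smul (polyExpDualHom ξ) c ω,
      LinearMap.smul_apply, hω p hp, smul_zero]

lemma span_inverseSystem {K : Type*} [Field K] {n : ℕ}
    (I : Ideal (MvPolynomial (Fin n) K)) (ξ : Fin n → K) :
    Submodule.span K (inverseSystem I ξ) = invSysSubmodule I ξ :=
  Submodule.span_eq (invSysSubmodule I ξ)

set_option maxHeartbeats 1000000 in
set_option synthInstance.maxHeartbeats 400000 in

/-- Description of the dual of an Artinian algebra `A = 𝕂[x]/I` of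
dimension `r` over an algebraically closed field `𝕂` of characteristic 0, with zero set
`{ξ₁,…,ξ_{r'}}`: (i) each `Dᵢ = D_{ξᵢ}(I)` is stable under partial derivatives;
(ii) `Σ dim Dᵢ = r`; (iii) a linear form vanishes on `I` iff it is `Σᵢ ωᵢ·e_{ξᵢ}` with
`ωᵢ ∈ Dᵢ`, and such a decomposition is unique. -/
theorem statement3 {K : Type*} [Field K] [CharZero K] [IsAlgClosed K] {n : ℕ}
    (r r' : ℕ) (I : Ideal (MvPolynomial (Fin n) K))
    (hfin : Module.Finite K (MvPolynomial (Fin n) K ⧸ I))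
    (hr : Module.finrank K (MvPolynomial (Fin n) K ⧸ I) = r)
    (ξ : Fin r' → Fin n → K) (hξ : Function.Injective ξ)
    (hzero : Set.range ξ = {x : Fin n → K | ∀ p ∈ I, MvPolynomial.aeval x p = 0}) :
    (∀ i : Fin r', ∀ ω ∈ inverseSystem I (ξ i), ∀ j : Fin n,
        MvPolynomial.pderiv j ω ∈ inverseSystem I (ξ i)) ∧
    (∑ i : Fin r', Module.finrank K (Submodule.span K (inverseSystem I (ξ i)))) = r ∧
    (∀ Λ : Module.Dual K (MvPolynomial (Fin n) K),
      ((∀ p ∈ I, Λ p = 0) ↔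
        ∃ ω : Fin r' → MvPolynomial (Fin n) K,
          (∀ i, ω i ∈ inverseSystem I (ξ i)) ∧
          Λ = ∑ i, PolyExp.polyExpDual (ω i) (ξ i)) ∧
      ((∀ p ∈ I, Λ p = 0) →
        ∃! ω : Fin r' → MvPolynomial (Fin n) K,
          (∀ i, ω i ∈ inverseSystem I (ξ i)) ∧
          Λ = ∑ i, PolyExp.polyExpDual (ω i) (ξ i))) := by
  classical
  obtain ⟨N, hN⟩ := PolyExp.exists_N_ord_le I hξ hzero
  have part1 : ∀ i : Fin r', ∀ ω ∈ inverseSystem I (ξ i), ∀ j : Fin n,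
      MvPolynomial.pderiv j ω ∈ inverseSystem I (ξ i) := by
    intro i ω hω j p hp
    rw [PolyExp.polyExpDual_pderiv]
    exact hω _ (Ideal.mul_mem_left _ _ hp)
  have decomp : ∀ Λ : Module.Dual K (MvPolynomial (Fin n) K), (∀ p ∈ I, Λ p = 0) →
      ∃ ω : Fin r' → MvPolynomial (Fin n) K,
        (∀ i, ω i ∈ inverseSystem I (ξ i)) ∧ Λ = ∑ i, PolyExp.polyExpDual (ω i) (ξ i) := by
    intro Λ hΛ
    obtain ⟨ω, h1, h2⟩ := PolyExp.exists_decomposition hξ hN Λ hΛ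
    exact ⟨ω, h1, h2⟩
  have conv : ∀ (ω : Fin r' → MvPolynomial (Fin n) K), (∀ i, ω i ∈ inverseSystem I (ξ i)) →
      ∀ p ∈ I, (∑ i, PolyExp.polyExpDual (ω i) (ξ i)) p = 0 := by
    intro ω hω p hp
    rw [LinearMap.sum_apply]
    exact Finset.sum_eq_zero fun i _ => hω i p hp
  have uniq : ∀ y₁ y₂ : Fin r' → MvPolynomial (Fin n) K,
      (∑ i, PolyExp.polyExpDual (y₁ i) (ξ i)) = (∑ i, PolyExp.polyExpDual (y₂ i) (ξ i)) →
      y₁ = y₂ := by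
    intro y₁ y₂ h
    funext i
    have hs : ∑ i, PolyExp.polyExpDual (y₁ i - y₂ i) (ξ i) = 0 := by
      have hsub : ∀ i : Fin r', PolyExp.polyExpDual (y₁ i - y₂ i) (ξ i)
          = PolyExp.polyExpDual (y₁ i) (ξ i) - PolyExp.polyExpDual (y₂ i) (ξ i) :=
        fun i => map_sub (PolyExp.polyExpDualHom (ξ i)) (y₁ i) (y₂ i)
      rw [Finset.sum_congr rfl fun i _ => hsub i, Finset.sum_sub_distrib, h, sub_self]
    exact sub_eq_zero.mp (PolyExp.eq_zero_of_sum_polyExpDual hξ hs i)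
  refine ⟨part1, ?_, fun Λ => ⟨⟨fun h => decomp Λ h, ?_⟩, fun h => ?_⟩⟩
  · -- dimension count
    set D : Fin r' → Submodule K (MvPolynomial (Fin n) K) :=
      fun i => invSysSubmodule I (ξ i) with hD
    set V : Submodule K (Module.Dual K (MvPolynomial (Fin n) K)) :=
      (Submodule.restrictScalars K (I : Submodule (MvPolynomial (Fin n) K)
        (MvPolynomial (Fin n) K))).dualAnnihilator with hV
    set Φ : ((i : Fin r') → D i) →ₗ[K] Module.Dual K (MvPolynomial (Fin n) K) :=
      ∑ i, (PolyExp.polyExpDualHom (ξ i)) ∘ₗ ((D i).subtype ∘ₗ LinearMap.proj i) with hΦ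
    have hΦapply : ∀ ωs : (i : Fin r') → D i,
        Φ ωs = ∑ i, PolyExp.polyExpDual (↑(ωs i)) (ξ i) := by
      intro ωs
      rw [hΦ, LinearMap.sum_apply]
      rfl
    have hmem : ∀ ωs, Φ ωs ∈ V := by
      intro ωs
      rw [hV, Submodule.mem_dualAnnihilator]
      intro w hw
      rw [Submodule.restrictScalars_mem] at hw
      rw [hΦapply]
      exact conv _ (fun i => (ωs i).2) w hw
    set Φ' : ((i : Fin r') → D i) →ₗ[K] V := Φ.codRestrict V hmem with hΦ'
    have hinj : Function.Injective Φ' := by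
      intro a b hab
      have h1 : Φ a = Φ b := congrArg Subtype.val hab
      rw [hΦapply, hΦapply] at h1
      have h2 := uniq _ _ h1
      funext i
      exact Subtype.ext (congrFun h2 i)
    have hsurj : Function.Surjective Φ' := by
      rintro ⟨Λ, hΛ⟩
      rw [hV, Submodule.mem_dualAnnihilator] at hΛ
      have hΛ' : ∀ p ∈ I, Λ p = 0 := fun p hp =>
        hΛ p ((Submodule.restrictScalars_mem K _ p).mpr hp)
      obtain ⟨ω, h1, h2⟩ := decomp Λ hΛ'
      refine ⟨fun i => ⟨ω i, h1 i⟩, Subtype.ext ?_⟩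
      show Φ _ = Λ
      rw [hΦapply]
      exact h2.symm
    have e : ((i : Fin r') → D i) ≃ₗ[K] V := LinearEquiv.ofBijective Φ' ⟨hinj, hsurj⟩
    have e3 : (MvPolynomial (Fin n) K ⧸ Submodule.restrictScalars K
        (I : Submodule (MvPolynomial (Fin n) K) (MvPolynomial (Fin n) K))) ≃ₗ[K]
        (MvPolynomial (Fin n) K ⧸ I) :=
      Submodule.Quotient.restrictScalarsEquiv K _
    haveI hfin1 : Module.Finite K (MvPolynomial (Fin n) K ⧸ Submodule.restrictScalars K
        (I : Submodule (MvPolynomial (Fin n) K) (MvPolynomial (Fin n) K))) :=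
      Module.Finite.equiv e3.symm
    have e2 : Module.Dual K (MvPolynomial (Fin n) K ⧸ Submodule.restrictScalars K
        (I : Submodule (MvPolynomial (Fin n) K) (MvPolynomial (Fin n) K))) ≃ₗ[K] V :=
      Submodule.dualQuotEquivDualAnnihilator _
    haveI hfinV : Module.Finite K V := Module.Finite.equiv e2
    haveI hfinPi : Module.Finite K ((i : Fin r') → D i) := Module.Finite.equiv e.symm
    haveI hfinD : ∀ i, Module.Finite K (D i) := by
      intro i
      refine Module.Finite.of_surjective (LinearMap.proj (R := K)
        (φ := fun i => D i) i) fun b => ?_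
      exact ⟨Pi.single (M := fun j => (D j : Type _)) i b, by simp⟩
    calc ∑ i, Module.finrank K (Submodule.span K (inverseSystem I (ξ i)))
        = ∑ i, Module.finrank K (D i) := by
          refine Finset.sum_congr rfl fun i _ => ?_
          rw [span_inverseSystem]
      _ = Module.finrank K ((i : Fin r') → D i) := (Module.finrank_pi_fintype K).symm
      _ = Module.finrank K V := e.finrank_eq
      _ = Module.finrank K (Module.Dual K (MvPolynomial (Fin n) K ⧸
            Submodule.restrictScalars K (I : Submodule (MvPolynomial (Fin n) K)
            (MvPolynomial (Fin n) K)))) := (LinearEquiv.finrank_eq e2).symm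
      _ = Module.finrank K (MvPolynomial (Fin n) K ⧸ Submodule.restrictScalars K
            (I : Submodule (MvPolynomial (Fin n) K) (MvPolynomial (Fin n) K))) :=
          Subspace.dual_finrank_eq
      _ = Module.finrank K (MvPolynomial (Fin n) K ⧸ I) := e3.finrank_eq
      _ = r := hr
  · rintro ⟨ω, hω, rfl⟩ p hp
    exact conv ω hω p hp
  · obtain ⟨ω, h1, h2⟩ := decomp Λ h
    refine ⟨ω, ⟨h1, h2⟩, ?_⟩
    rintro y ⟨hy1, hy2⟩
    exact uniq y ω (by rw [← hy2, ← h2])
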